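/- Let p ≤ q ≤ r be integers with p ≥ 1. The real symmetric matrix G(p,q,r) is positive semidefinite and singular (degenerate) if and only if (p,q,r) is one of (3,3,3), (2,4,4), (2,3,6); moreover, in each of these cases the kernel of G(p,q,r) is one-dimensional. -/

import Mathlib

/-- The vertex type of the tree `T_{p,q,r}`: a central vertex together with three chains
having `p-1`, `q-1` and `r-1` further vertices respectively (so `T_{p,q,r}` has
`p + q + r - 2` vertices when `p, q, r ≥ 1`). -/
abbrev TVertex (p q r : ℕ) : Type := Unit ⊕ (Fin (p - 1) ⊕ (Fin (q - 1) ⊕ Fin (r - 1)))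

/-- Adjacency in the tree `T_{p,q,r}`: the central vertex is adjacent to the first vertex of
each chain, and consecutive vertices of a chain are adjacent. -/
def TAdj {p q r : ℕ} : TVertex p q r → TVertex p q r → Bool
  | Sum.inl _, Sum.inr (Sum.inl i) => i.val == 0
  | Sum.inl _, Sum.inr (Sum.inr (Sum.inl i)) => i.val == 0
  | Sum.inl _, Sum.inr (Sum.inr (Sum.inr i)) => i.val == 0
  | Sum.inr (Sum.inl i), Sum.inl _ => i.val == 0
  | Sum.inr (Sum.inr (Sum.inl i)), Sum.inl _ => i.val == 0
  | Sum.inr (Sum.inr (Sum.inr i)), Sum.inl _ => i.val == 0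
  | Sum.inr (Sum.inl i), Sum.inr (Sum.inl j) => (i.val + 1 == j.val) || (j.val + 1 == i.val)
  | Sum.inr (Sum.inr (Sum.inl i)), Sum.inr (Sum.inr (Sum.inl j)) =>
      (i.val + 1 == j.val) || (j.val + 1 == i.val)
  | Sum.inr (Sum.inr (Sum.inr i)), Sum.inr (Sum.inr (Sum.inr j)) =>
      (i.val + 1 == j.val) || (j.val + 1 == i.val)
  | _, _ => false

/-- The Gram matrix `G(p,q,r)` of the tree `T_{p,q,r}`: diagonal entries `2`, entries `-1`
between adjacent vertices, and `0` otherwise. -/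
def gramT (p q r : ℕ) : Matrix (TVertex p q r) (TVertex p q r) ℤ :=
  Matrix.of fun v w => if v = w then 2 else if TAdj v w then -1 else 0


open Matrix

lemma sum_ind {m : ℕ} (y : Fin m → ℝ) (a : ℕ) :
    (∑ j : Fin m, if (j : ℕ) = a then y j else 0) = if h : a < m then y ⟨a, h⟩ else 0 := by
  split_ifs with h
  · rw [Finset.sum_eq_single (⟨a, h⟩ : Fin m)]
    · simp
    · intro j _ hj
      rw [if_neg]
      exact fun hc => hj (Fin.ext hc)
    · simp
  · exact Finset.sum_eq_zero fun j _ => if_neg (by omega)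

lemma sum_pred {m : ℕ} (y : Fin m → ℝ) (a : ℕ) :
    (∑ j : Fin m, if (j : ℕ) + 1 = a then y j else 0)
      = if h : a - 1 < m ∧ 1 ≤ a then y ⟨a - 1, h.1⟩ else 0 := by
  cases a with
  | zero => simp
  | succ b =>
    have h1 : (∑ j : Fin m, if (j : ℕ) + 1 = b + 1 then y j else 0)
        = ∑ j : Fin m, if (j : ℕ) = b then y j else 0 := by
      refine Finset.sum_congr rfl fun j _ => ?_
      congr 1
      simp
    rw [h1, sum_ind]
    by_cases h : b < m
    · rw [dif_pos h, dif_pos ⟨by omega, by omega⟩]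
      congr 1
    · rw [dif_neg h, dif_neg (by omega)]

/-- the fundamental chain recurrence solver -/
lemma chain_solve (m : ℕ) (c : ℕ → ℝ) (s : ℝ)
    (hout : ∀ n, m ≤ n → c n = 0)
    (hrec : ∀ n, n < m → 2 * c n = c (n + 1) + (if n = 0 then s else c (n - 1))) :
    ∀ n, (m + 1 : ℝ) * c n = ((m - n : ℕ) : ℝ) * s := by
  have P : ∀ k n, n + k = m → c n = (k : ℝ) * c (m - 1) := by
    intro k
    induction k using Nat.strong_induction_on with
    | _ k ih =>
      match k with
      | 0 => intro n hn; rw [hout n (by omega)]; simp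
      | 1 => intro n hn
             have : n = m - 1 := by omega
             rw [this]; ring
      | (k+2) =>
        intro n hn
        have h1 := ih (k+1) (by omega) (n+1) (by omega)
        have h2 := ih k (by omega) (n+2) (by omega)
        have hr := hrec (n+1) (by omega)
        rw [if_neg (by omega)] at hr
        simp only [Nat.add_sub_cancel] at hr
        push_cast
        push_cast at h1 h2
        linarith
  by_cases hm : m = 0
  · intro n
    rw [hout n (by omega)]
    simp [hm]
  · have hs : s = (m + 1 : ℝ) * c (m - 1) := by
      have hr := hrec 0 (by omega)
      rw [if_pos rfl] at hr
      have h0 := P m 0 (by omega)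
      have h1 : c 1 = ((m - 1 : ℕ) : ℝ) * c (m - 1) := by
        by_cases h2 : 2 ≤ m
        · exact P (m-1) 1 (by omega)
        · have hm1 : m = 1 := by omega
          rw [hm1, hout 1 (by omega)]; simp
      rw [h0, h1] at hr
      have : ((m - 1 : ℕ) : ℝ) = (m : ℝ) - 1 := by
        push_cast [Nat.cast_sub (by omega : 1 ≤ m)]; ring
      rw [this] at hr
      linarith
    intro n
    by_cases hn : n < m
    · have := P (m - n) n (by omega)
      rw [this, hs]
      have : ((m - n : ℕ) : ℝ) = (m : ℝ) - n := by
        push_cast [Nat.cast_sub (by omega : n ≤ m)]; ring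
      rw [this]
      ring
    · rw [hout n (by omega), Nat.sub_eq_zero_of_le (by omega)]
      simp

lemma tri_split {m : ℕ} (y : Fin m → ℝ) (i : Fin m) :
    (∑ j : Fin m, if i = j then 2 * y j
        else if (i : ℕ) + 1 = (j : ℕ) ∨ (j : ℕ) + 1 = (i : ℕ) then -y j else 0)
      = 2 * y i - (if h : (i : ℕ) + 1 < m then y ⟨(i : ℕ) + 1, h⟩ else 0)
        - (if h : (i : ℕ) - 1 < m ∧ 1 ≤ (i : ℕ) then y ⟨(i : ℕ) - 1, h.1⟩ else 0) := by
  have key : ∀ j : Fin m, (if i = j then 2 * y j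
        else if (i : ℕ) + 1 = (j : ℕ) ∨ (j : ℕ) + 1 = (i : ℕ) then -y j else 0)
      = (if (j : ℕ) = (i : ℕ) then 2 * y j else 0)
        + ((if (j : ℕ) = (i : ℕ) + 1 then -y j else 0)
          + (if (j : ℕ) + 1 = (i : ℕ) then -y j else 0)) := by
    intro j
    simp only [Fin.ext_iff]
    split_ifs <;> first | ring1 | (exfalso; omega)
  rw [Finset.sum_congr rfl (fun j _ => key j), Finset.sum_add_distrib, Finset.sum_add_distrib,
    sum_ind, sum_ind, sum_pred, dif_pos i.isLt]
  split_ifs <;> simp <;> ring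

lemma gram_eqs (p q r : ℕ) (x : TVertex p q r → ℝ)
    (hx : ((gramT p q r).map (Int.cast : ℤ → ℝ)) *ᵥ x = 0)
    (c1 c2 c3 : ℕ → ℝ)
    (h1 : ∀ n, c1 n = if h : n < p - 1 then x (Sum.inr (Sum.inl ⟨n, h⟩)) else 0)
    (h2 : ∀ n, c2 n = if h : n < q - 1 then x (Sum.inr (Sum.inr (Sum.inl ⟨n, h⟩))) else 0)
    (h3 : ∀ n, c3 n = if h : n < r - 1 then x (Sum.inr (Sum.inr (Sum.inr ⟨n, h⟩))) else 0) :
    2 * x (Sum.inl ()) = c1 0 + c2 0 + c3 0 ∧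
    (∀ n, n < p - 1 → 2 * c1 n = c1 (n+1) + (if n = 0 then x (Sum.inl ()) else c1 (n-1))) ∧
    (∀ n, n < q - 1 → 2 * c2 n = c2 (n+1) + (if n = 0 then x (Sum.inl ()) else c2 (n-1))) ∧
    (∀ n, n < r - 1 → 2 * c3 n = c3 (n+1) + (if n = 0 then x (Sum.inl ()) else c3 (n-1))) := by
  have hud : (default : Unit) = () := rfl
  refine ⟨?_, ?_, ?_, ?_⟩
  · have hc := congrFun hx (Sum.inl ())
    simp only [Matrix.mulVec, dotProduct, Fintype.sum_sum_type, Fintype.sum_unique,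
      Matrix.map_apply, gramT, TAdj, Matrix.of_apply, Pi.zero_apply, reduceCtorEq, if_true,
      if_false, beq_iff_eq, apply_ite (fun z : ℤ => (z : ℝ)), Int.cast_neg, Int.cast_zero,
      Int.cast_one, Int.cast_two, Int.cast_ofNat, mul_ite, neg_mul, one_mul, zero_mul, ite_mul,
      hud] at hc
    rw [sum_ind, sum_ind, sum_ind] at hc
    have e1 : (if h : (0:ℕ) < p - 1 then -x (Sum.inr (Sum.inl ⟨0, h⟩)) else 0) = -c1 0 := by
      rw [h1 0]; split_ifs <;> simp
    have e2 : (if h : (0:ℕ) < q - 1 then -x (Sum.inr (Sum.inr (Sum.inl ⟨0, h⟩))) else 0)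
        = -c2 0 := by
      rw [h2 0]; split_ifs <;> simp
    have e3 : (if h : (0:ℕ) < r - 1 then -x (Sum.inr (Sum.inr (Sum.inr ⟨0, h⟩))) else 0)
        = -c3 0 := by
      rw [h3 0]; split_ifs <;> simp
    rw [e1, e2, e3] at hc
    linarith
  · intro n hn
    have hc := congrFun hx (Sum.inr (Sum.inl ⟨n, hn⟩))
    simp only [Matrix.mulVec, dotProduct, Fintype.sum_sum_type, Fintype.sum_unique,
      Matrix.map_apply, gramT, TAdj, Matrix.of_apply, Pi.zero_apply, reduceCtorEq, if_true,
      if_false, beq_iff_eq, apply_ite (fun z : ℤ => (z : ℝ)), Int.cast_neg, Int.cast_zero,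
      Int.cast_one, Int.cast_two, Int.cast_ofNat, mul_ite, neg_mul, one_mul, zero_mul, ite_mul,
      Bool.or_eq_true, Finset.sum_const_zero, Sum.inr.injEq, Sum.inl.injEq, hud] at hc
    rw [tri_split (fun j => x (Sum.inr (Sum.inl j))) ⟨n, hn⟩] at hc
    have e0 : x (Sum.inr (Sum.inl ⟨n, hn⟩)) = c1 n := by rw [h1 n, dif_pos hn]
    have eA : (if h : n + 1 < p - 1 then x (Sum.inr (Sum.inl ⟨n + 1, h⟩)) else 0)
        = c1 (n + 1) := (h1 (n+1)).symm
    simp only [e0, eA] at hc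
    by_cases hn0 : n = 0
    · subst hn0
      rw [if_pos rfl] at hc ⊢
      rw [dif_neg (by omega)] at hc
      linarith
    · rw [if_neg hn0] at hc ⊢
      rw [dif_pos ⟨by omega, by omega⟩] at hc
      have eB : x (Sum.inr (Sum.inl ⟨n - 1, by omega⟩)) = c1 (n - 1) := by
        rw [h1 (n-1), dif_pos (by omega)]
      rw [eB] at hc
      linarith
  · intro n hn
    have hc := congrFun hx (Sum.inr (Sum.inr (Sum.inl ⟨n, hn⟩)))
    simp only [Matrix.mulVec, dotProduct, Fintype.sum_sum_type, Fintype.sum_unique,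
      Matrix.map_apply, gramT, TAdj, Matrix.of_apply, Pi.zero_apply, reduceCtorEq, if_true,
      if_false, beq_iff_eq, apply_ite (fun z : ℤ => (z : ℝ)), Int.cast_neg, Int.cast_zero,
      Int.cast_one, Int.cast_two, Int.cast_ofNat, mul_ite, neg_mul, one_mul, zero_mul, ite_mul,
      Bool.or_eq_true, Finset.sum_const_zero, Sum.inr.injEq, Sum.inl.injEq, hud] at hc
    rw [tri_split (fun j => x (Sum.inr (Sum.inr (Sum.inl j)))) ⟨n, hn⟩] at hc
    have e0 : x (Sum.inr (Sum.inr (Sum.inl ⟨n, hn⟩))) = c2 n := by rw [h2 n, dif_pos hn]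
    have eA : (if h : n + 1 < q - 1 then x (Sum.inr (Sum.inr (Sum.inl ⟨n + 1, h⟩))) else 0)
        = c2 (n + 1) := (h2 (n+1)).symm
    simp only [e0, eA] at hc
    by_cases hn0 : n = 0
    · subst hn0
      rw [if_pos rfl] at hc ⊢
      rw [dif_neg (by omega)] at hc
      linarith
    · rw [if_neg hn0] at hc ⊢
      rw [dif_pos ⟨by omega, by omega⟩] at hc
      have eB : x (Sum.inr (Sum.inr (Sum.inl ⟨n - 1, by omega⟩))) = c2 (n - 1) := by
        rw [h2 (n-1), dif_pos (by omega)]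
      rw [eB] at hc
      linarith
  · intro n hn
    have hc := congrFun hx (Sum.inr (Sum.inr (Sum.inr ⟨n, hn⟩)))
    simp only [Matrix.mulVec, dotProduct, Fintype.sum_sum_type, Fintype.sum_unique,
      Matrix.map_apply, gramT, TAdj, Matrix.of_apply, Pi.zero_apply, reduceCtorEq, if_true,
      if_false, beq_iff_eq, apply_ite (fun z : ℤ => (z : ℝ)), Int.cast_neg, Int.cast_zero,
      Int.cast_one, Int.cast_two, Int.cast_ofNat, mul_ite, neg_mul, one_mul, zero_mul, ite_mul,
      Bool.or_eq_true, Finset.sum_const_zero, Sum.inr.injEq, Sum.inl.injEq, hud] at hc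
    rw [tri_split (fun j => x (Sum.inr (Sum.inr (Sum.inr j)))) ⟨n, hn⟩] at hc
    have e0 : x (Sum.inr (Sum.inr (Sum.inr ⟨n, hn⟩))) = c3 n := by rw [h3 n, dif_pos hn]
    have eA : (if h : n + 1 < r - 1 then x (Sum.inr (Sum.inr (Sum.inr ⟨n + 1, h⟩))) else 0)
        = c3 (n + 1) := (h3 (n+1)).symm
    simp only [e0, eA] at hc
    by_cases hn0 : n = 0
    · subst hn0
      rw [if_pos rfl] at hc ⊢
      rw [dif_neg (by omega)] at hc
      linarith
    · rw [if_neg hn0] at hc ⊢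
      rw [dif_pos ⟨by omega, by omega⟩] at hc
      have eB : x (Sum.inr (Sum.inr (Sum.inr ⟨n - 1, by omega⟩))) = c3 (n - 1) := by
        rw [h3 (n-1), dif_pos (by omega)]
      rw [eB] at hc
      linarith

lemma solve_num (p q r : ℕ) (hp : 1 ≤ p) (hpq : p ≤ q) (hqr : q ≤ r)
    (h : p * q + q * r + r * p = p * q * r) :
    (p, q, r) = (3, 3, 3) ∨ (p, q, r) = (2, 4, 4) ∨ (p, q, r) = (2, 3, 6) := by
  have hq : 1 ≤ q := le_trans hp hpq
  have hr : 1 ≤ r := le_trans hq hqr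
  have hpr : p ≤ r := le_trans hpq hqr
  have hp3 : p ≤ 3 := by
    by_contra hc
    push_neg at hc
    have a1 : p * q ≤ q * r := by
      rw [mul_comm]
      exact Nat.mul_le_mul_left q hpr
    have a2 : r * p ≤ q * r := by
      rw [mul_comm q r]
      exact Nat.mul_le_mul_left r hpq
    have a3 : 4 * (q * r) ≤ p * (q * r) := Nat.mul_le_mul_right (q * r) hc
    have a4 : 0 < q * r := Nat.mul_pos hq hr
    rw [mul_assoc] at h
    omega
  interval_cases p
  · exfalso
    rw [one_mul, mul_one] at h
    have : q * 1 ≤ q * r := Nat.mul_le_mul_left q hr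
    omega
  · have hq4 : q ≤ 4 := by
      by_contra hc
      push_neg at hc
      have b1 : 5 * r ≤ q * r := Nat.mul_le_mul_right r hc
      have b2 : 2 * q * r = 2 * (q * r) := by ring
      omega
    interval_cases q
    · exfalso; omega
    · right; right
      have : r = 6 := by omega
      rw [this]
    · right; left
      have : r = 4 := by omega
      rw [this]
  · have hq3 : q ≤ 3 := by
      by_contra hc
      push_neg at hc
      have b1 : 4 * r ≤ q * r := Nat.mul_le_mul_right r hc
      have b2 : 3 * q * r = 3 * (q * r) := by ring
      omega
    interval_cases q
    left
    have : r = 3 := by omega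
    rw [this]

lemma forward (p q r : ℕ) (hp : 1 ≤ p) (hpq : p ≤ q) (hqr : q ≤ r)
    (hdet : ((gramT p q r).map (Int.cast : ℤ → ℝ)).det = 0) :
    (p, q, r) = (3, 3, 3) ∨ (p, q, r) = (2, 4, 4) ∨ (p, q, r) = (2, 3, 6) := by
  obtain ⟨x, hx0, hx⟩ := Matrix.exists_mulVec_eq_zero_iff.mpr hdet
  set s := x (Sum.inl ()) with hs_def
  set c1 : ℕ → ℝ := fun n => if h : n < p - 1 then x (Sum.inr (Sum.inl ⟨n, h⟩)) else 0 with hc1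
  set c2 : ℕ → ℝ := fun n =>
    if h : n < q - 1 then x (Sum.inr (Sum.inr (Sum.inl ⟨n, h⟩))) else 0 with hc2
  set c3 : ℕ → ℝ := fun n =>
    if h : n < r - 1 then x (Sum.inr (Sum.inr (Sum.inr ⟨n, h⟩))) else 0 with hc3
  obtain ⟨e0, e1, e2, e3⟩ := gram_eqs p q r x hx c1 c2 c3 (fun n => rfl) (fun n => rfl)
    (fun n => rfl)
  have k1 := chain_solve (p - 1) c1 s (fun n hn => by rw [hc1]; exact dif_neg (by omega)) e1
  have k2 := chain_solve (q - 1) c2 s (fun n hn => by rw [hc2]; exact dif_neg (by omega)) e2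
  have k3 := chain_solve (r - 1) c3 s (fun n hn => by rw [hc3]; exact dif_neg (by omega)) e3
  have hq : 1 ≤ q := le_trans hp hpq
  have hr : 1 ≤ r := le_trans hq hqr
  have cast1 : ((p - 1 : ℕ) : ℝ) = (p : ℝ) - 1 := by
    rw [Nat.cast_sub hp, Nat.cast_one]
  have cast2 : ((q - 1 : ℕ) : ℝ) = (q : ℝ) - 1 := by
    rw [Nat.cast_sub hq, Nat.cast_one]
  have cast3 : ((r - 1 : ℕ) : ℝ) = (r : ℝ) - 1 := by
    rw [Nat.cast_sub hr, Nat.cast_one]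
  by_cases hs : s = 0
  · exfalso
    apply hx0
    have z1 : ∀ n, c1 n = 0 := fun n => by
      have := k1 n
      rw [hs, mul_zero] at this
      have hpos : (0:ℝ) < ((p-1:ℕ):ℝ) + 1 := by positivity
      exact (mul_eq_zero.mp this).resolve_left (by positivity)
    have z2 : ∀ n, c2 n = 0 := fun n => by
      have := k2 n
      rw [hs, mul_zero] at this
      exact (mul_eq_zero.mp this).resolve_left (by positivity)
    have z3 : ∀ n, c3 n = 0 := fun n => by
      have := k3 n
      rw [hs, mul_zero] at this
      exact (mul_eq_zero.mp this).resolve_left (by positivity)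
    funext v
    rcases v with _ | (j | (j | j))
    · exact hs
    · have := z1 j.val
      rw [hc1] at this
      simpa [dif_pos j.isLt] using this
    · have := z2 j.val
      rw [hc2] at this
      simpa [dif_pos j.isLt] using this
    · have := z3 j.val
      rw [hc3] at this
      simpa [dif_pos j.isLt] using this
  · have h1 : (p : ℝ) * c1 0 = ((p:ℝ) - 1) * s := by
      have := k1 0
      rw [Nat.sub_zero, cast1] at this
      rw [← this]
      ring
    have h2 : (q : ℝ) * c2 0 = ((q:ℝ) - 1) * s := by
      have := k2 0
      rw [Nat.sub_zero, cast2] at this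
      rw [← this]
      ring
    have h3 : (r : ℝ) * c3 0 = ((r:ℝ) - 1) * s := by
      have := k3 0
      rw [Nat.sub_zero, cast3] at this
      rw [← this]
      ring
    have key : s * (((p:ℝ)*q + (q:ℝ)*r + (r:ℝ)*p) - (p:ℝ)*q*r) = 0 := by
      linear_combination (q:ℝ)*r*h1 + (p:ℝ)*r*h2 + (p:ℝ)*q*h3 + (p:ℝ)*q*r*e0
    have keyn : p * q + q * r + r * p = p * q * r := by
      have := (mul_eq_zero.mp key).resolve_left hs
      have : ((p*q + q*r + r*p : ℕ) : ℝ) = ((p*q*r : ℕ) : ℝ) := by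
        push_cast
        linarith
      exact_mod_cast this
    exact solve_num p q r hp hpq hqr keyn

-- doubled simple roots of E8 (plus affine roots)
def w1 : Fin 8 → ℤ := ![1,-1,-1,-1,-1,-1,-1,1]
def w2 : Fin 8 → ℤ := ![2,2,0,0,0,0,0,0]
def w3 : Fin 8 → ℤ := ![-2,2,0,0,0,0,0,0]
def w4 : Fin 8 → ℤ := ![0,-2,2,0,0,0,0,0]
def w5 : Fin 8 → ℤ := ![0,0,-2,2,0,0,0,0]
def w6 : Fin 8 → ℤ := ![0,0,0,-2,2,0,0,0]
def w7 : Fin 8 → ℤ := ![0,0,0,0,-2,2,0,0]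
def w8 : Fin 8 → ℤ := ![0,0,0,0,0,-2,2,0]
def w0e8 : Fin 8 → ℤ := ![0,0,0,0,0,0,-2,-2]
def w0e7 : Fin 8 → ℤ := ![0,0,0,0,0,0,2,-2]
def w0e6 : Fin 8 → ℤ := ![-1,-1,-1,-1,-1,1,1,-1]

def N333 : Matrix (Fin 8) (TVertex 3 3 3) ℤ :=
  Matrix.of fun i v => (match v with
    | Sum.inl _ => w4
    | Sum.inr (Sum.inl j) => if j.val = 0 then w3 else w1
    | Sum.inr (Sum.inr (Sum.inl j)) => if j.val = 0 then w5 else w6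
    | Sum.inr (Sum.inr (Sum.inr j)) => if j.val = 0 then w2 else w0e6) i

def N244 : Matrix (Fin 8) (TVertex 2 4 4) ℤ :=
  Matrix.of fun i v => (match v with
    | Sum.inl _ => w4
    | Sum.inr (Sum.inl _) => w2
    | Sum.inr (Sum.inr (Sum.inl j)) => if j.val = 0 then w3 else if j.val = 1 then w1 else w0e7
    | Sum.inr (Sum.inr (Sum.inr j)) => if j.val = 0 then w5 else if j.val = 1 then w6 else w7) i

def N236 : Matrix (Fin 8) (TVertex 2 3 6) ℤ :=
  Matrix.of fun i v => (match v with
    | Sum.inl _ => w4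
    | Sum.inr (Sum.inl _) => w2
    | Sum.inr (Sum.inr (Sum.inl j)) => if j.val = 0 then w3 else w1
    | Sum.inr (Sum.inr (Sum.inr j)) =>
        if j.val = 0 then w5 else if j.val = 1 then w6 else if j.val = 2 then w7
        else if j.val = 3 then w8 else w0e8) i

def c333 : TVertex 3 3 3 → ℤ
  | Sum.inl _ => 3
  | Sum.inr (Sum.inl j) => 2 - j.val
  | Sum.inr (Sum.inr (Sum.inl j)) => 2 - j.val
  | Sum.inr (Sum.inr (Sum.inr j)) => 2 - j.val

def c244 : TVertex 2 4 4 → ℤ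
  | Sum.inl _ => 4
  | Sum.inr (Sum.inl _) => 2
  | Sum.inr (Sum.inr (Sum.inl j)) => 3 - j.val
  | Sum.inr (Sum.inr (Sum.inr j)) => 3 - j.val

def c236 : TVertex 2 3 6 → ℤ
  | Sum.inl _ => 6
  | Sum.inr (Sum.inl _) => 3
  | Sum.inr (Sum.inr (Sum.inl j)) => 4 - 2 * j.val
  | Sum.inr (Sum.inr (Sum.inr j)) => 5 - j.val

lemma mulVec_map_cast {n' : Type*} [Fintype n'] (M : Matrix n' n' ℤ) (v : n' → ℤ)
    (h : M *ᵥ v = 0) :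
    (M.map (Int.cast : ℤ → ℝ)) *ᵥ (fun i => ((v i : ℤ) : ℝ)) = 0 := by
  funext i
  have h2 := congrFun h i
  have h3 := RingHom.map_mulVec (Int.castRingHom ℝ) M v i
  rw [h2] at h3
  simpa [Function.comp_def] using h3.symm

lemma psd_of_four {n' m' : Type*} [Fintype n'] [Fintype m'] (G : Matrix n' n' ℤ)
    (N : Matrix m' n' ℤ) (hsym : Gᵀ = G) (h4 : Nᵀ * N = (4 : ℤ) • G) :
    (G.map (Int.cast : ℤ → ℝ)).PosSemidef := by
  have hR : (N.map (Int.cast : ℤ → ℝ))ᵀ * (N.map (Int.cast : ℤ → ℝ))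
      = (4 : ℝ) • (G.map (Int.cast : ℤ → ℝ)) := by
    ext i j
    have h5 : (Nᵀ * N) i j = ((4 : ℤ) • G) i j := by rw [h4]
    simp only [Matrix.mul_apply, Matrix.transpose_apply, Matrix.smul_apply,
      smul_eq_mul] at h5
    simp only [Matrix.mul_apply, Matrix.transpose_apply, Matrix.map_apply,
      Matrix.smul_apply, smul_eq_mul]
    exact_mod_cast h5
  have hps : ((N.map (Int.cast : ℤ → ℝ))ᵀ * (N.map (Int.cast : ℤ → ℝ))).PosSemidef := by
    have := Matrix.posSemidef_conjTranspose_mul_self (N.map (Int.cast : ℤ → ℝ))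
    rwa [Matrix.conjTranspose_eq_transpose_of_trivial] at this
  constructor
  · show _ᴴ = _
    rw [Matrix.conjTranspose_eq_transpose_of_trivial, ← Matrix.transpose_map, hsym]
  · intro y
    have h6 := hps.2 y
    rw [hR] at h6
    have h7 : (0:ℝ) ≤ 4 * (y.sum fun i xi => y.sum fun j xj =>
        star xi * (G.map (Int.cast : ℤ → ℝ)) i j * xj) := by
      refine h6.trans_eq ?_
      unfold Finsupp.sum
      rw [Finset.mul_sum]
      refine Finset.sum_congr rfl fun i _ => ?_
      rw [Finset.mul_sum]
      refine Finset.sum_congr rfl fun j _ => ?_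
      show star (y i) * ((4:ℝ) * (G.map (Int.cast : ℤ → ℝ)) i j) * y j = _
      ring
    linarith

lemma psd236 : ((gramT 2 3 6).map (Int.cast : ℤ → ℝ)).PosSemidef :=
  psd_of_four _ N236 (by decide) (by decide)

lemma mv236 : ((gramT 2 3 6).map (Int.cast : ℤ → ℝ)) *ᵥ (fun v => ((c236 v : ℤ) : ℝ)) = 0 :=
  mulVec_map_cast _ _ (by decide)

lemma ne236 : (fun v : TVertex 2 3 6 => ((c236 v : ℤ) : ℝ)) ≠ 0 := by
  intro h
  have := congrFun h (Sum.inl ())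
  norm_num [c236] at this

lemma det236 : ((gramT 2 3 6).map (Int.cast : ℤ → ℝ)).det = 0 :=
  Matrix.exists_mulVec_eq_zero_iff.mp ⟨_, ne236, mv236⟩

lemma ker236 : LinearMap.ker (Matrix.toLin' ((gramT 2 3 6).map (Int.cast : ℤ → ℝ)))
    = Submodule.span ℝ {(fun v => ((c236 v : ℤ) : ℝ))} := by
  apply le_antisymm
  · intro y hy
    rw [LinearMap.mem_ker, Matrix.toLin'_apply] at hy
    set s := y (Sum.inl ()) with hs_def
    set c1 : ℕ → ℝ := fun n => if h : n < 2 - 1 then y (Sum.inr (Sum.inl ⟨n, h⟩)) else 0 with hc1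
    set c2 : ℕ → ℝ := fun n =>
      if h : n < 3 - 1 then y (Sum.inr (Sum.inr (Sum.inl ⟨n, h⟩))) else 0 with hc2
    set c3 : ℕ → ℝ := fun n =>
      if h : n < 6 - 1 then y (Sum.inr (Sum.inr (Sum.inr ⟨n, h⟩))) else 0 with hc3
    obtain ⟨e0, e1, e2, e3⟩ := gram_eqs 2 3 6 y hy c1 c2 c3 (fun n => rfl) (fun n => rfl)
      (fun n => rfl)
    have k1 := chain_solve 1 c1 s (fun n hn => by rw [hc1]; exact dif_neg (by omega)) e1
    have k2 := chain_solve 2 c2 s (fun n hn => by rw [hc2]; exact dif_neg (by omega)) e2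
    have k3 := chain_solve 5 c3 s (fun n hn => by rw [hc3]; exact dif_neg (by omega)) e3
    rw [Submodule.mem_span_singleton]
    refine ⟨s / 6, ?_⟩
    funext v
    simp only [Pi.smul_apply, smul_eq_mul]
    rcases v with ⟨⟩ | (j | (j | j))
    · simp only [c236]
      rw [← hs_def]
      norm_num
    · have hj := j.isLt
      have ey : c1 (j : ℕ) = y (Sum.inr (Sum.inl j)) := by
        simp only [hc1]
        rw [dif_pos j.isLt]
      have kk := k1 (j : ℕ)
      have hcast : (((1 : ℕ) - (j : ℕ) : ℕ) : ℝ) = 1 - ((j : ℕ) : ℝ) := by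
        rw [Nat.cast_sub (by omega)]
        norm_num
      rw [hcast, ey] at kk
      have hj0 : (((j : ℕ) : ℕ) : ℝ) = 0 := by
        have : (j : ℕ) = 0 := by omega
        rw [this]
        norm_num
      rw [hj0] at kk
      simp only [c236]
      push_cast
      linear_combination -kk / 2
    · have hj := j.isLt
      have ey : c2 (j : ℕ) = y (Sum.inr (Sum.inr (Sum.inl j))) := by
        simp only [hc2]
        rw [dif_pos j.isLt]
      have kk := k2 (j : ℕ)
      have hcast : (((2 : ℕ) - (j : ℕ) : ℕ) : ℝ) = 2 - ((j : ℕ) : ℝ) := by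
        rw [Nat.cast_sub (by omega)]
        norm_num
      rw [hcast, ey] at kk
      simp only [c236]
      push_cast
      linear_combination -kk / 3
    · have hj := j.isLt
      have ey : c3 (j : ℕ) = y (Sum.inr (Sum.inr (Sum.inr j))) := by
        simp only [hc3]
        rw [dif_pos j.isLt]
      have kk := k3 (j : ℕ)
      have hcast : (((5 : ℕ) - (j : ℕ) : ℕ) : ℝ) = 5 - ((j : ℕ) : ℝ) := by
        rw [Nat.cast_sub (by omega)]
        norm_num
      rw [hcast, ey] at kk
      simp only [c236]
      push_cast
      linear_combination -kk / 6
  · rw [Submodule.span_singleton_le_iff_mem, LinearMap.mem_ker, Matrix.toLin'_apply]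
    exact mv236

lemma rank236 : Module.finrank ℝ
    (LinearMap.ker (Matrix.toLin' ((gramT 2 3 6).map (Int.cast : ℤ → ℝ)))) = 1 := by
  rw [ker236]
  exact finrank_span_singleton ne236

lemma psd333 : ((gramT 3 3 3).map (Int.cast : ℤ → ℝ)).PosSemidef :=
  psd_of_four _ N333 (by decide) (by decide)

lemma mv333 : ((gramT 3 3 3).map (Int.cast : ℤ → ℝ)) *ᵥ (fun v => ((c333 v : ℤ) : ℝ)) = 0 :=
  mulVec_map_cast _ _ (by decide)

lemma ne333 : (fun v : TVertex 3 3 3 => ((c333 v : ℤ) : ℝ)) ≠ 0 := by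
  intro h
  have := congrFun h (Sum.inl ())
  norm_num [c333] at this

lemma det333 : ((gramT 3 3 3).map (Int.cast : ℤ → ℝ)).det = 0 :=
  Matrix.exists_mulVec_eq_zero_iff.mp ⟨_, ne333, mv333⟩

lemma ker333 : LinearMap.ker (Matrix.toLin' ((gramT 3 3 3).map (Int.cast : ℤ → ℝ)))
    = Submodule.span ℝ {(fun v => ((c333 v : ℤ) : ℝ))} := by
  apply le_antisymm
  · intro y hy
    rw [LinearMap.mem_ker, Matrix.toLin'_apply] at hy
    set s := y (Sum.inl ()) with hs_def
    set c1 : ℕ → ℝ := fun n => if h : n < 3 - 1 then y (Sum.inr (Sum.inl ⟨n, h⟩)) else 0 with hc1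
    set c2 : ℕ → ℝ := fun n =>
      if h : n < 3 - 1 then y (Sum.inr (Sum.inr (Sum.inl ⟨n, h⟩))) else 0 with hc2
    set c3 : ℕ → ℝ := fun n =>
      if h : n < 3 - 1 then y (Sum.inr (Sum.inr (Sum.inr ⟨n, h⟩))) else 0 with hc3
    obtain ⟨e0, e1, e2, e3⟩ := gram_eqs 3 3 3 y hy c1 c2 c3 (fun n => rfl) (fun n => rfl)
      (fun n => rfl)
    have k1 := chain_solve 2 c1 s (fun n hn => by rw [hc1]; exact dif_neg (by omega)) e1
    have k2 := chain_solve 2 c2 s (fun n hn => by rw [hc2]; exact dif_neg (by omega)) e2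
    have k3 := chain_solve 2 c3 s (fun n hn => by rw [hc3]; exact dif_neg (by omega)) e3
    rw [Submodule.mem_span_singleton]
    refine ⟨s / 3, ?_⟩
    funext v
    simp only [Pi.smul_apply, smul_eq_mul]
    rcases v with ⟨⟩ | (j | (j | j))
    · simp only [c333]
      rw [← hs_def]
      norm_num
    · have hj := j.isLt
      have ey : c1 (j : ℕ) = y (Sum.inr (Sum.inl j)) := by
        simp only [hc1]
        rw [dif_pos j.isLt]
      have kk := k1 (j : ℕ)
      have hcast : (((2 : ℕ) - (j : ℕ) : ℕ) : ℝ) = 2 - ((j : ℕ) : ℝ) := by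
        rw [Nat.cast_sub (by omega)]
        norm_num
      rw [hcast, ey] at kk
      simp only [c333]
      push_cast
      linear_combination -kk / 3
    · have hj := j.isLt
      have ey : c2 (j : ℕ) = y (Sum.inr (Sum.inr (Sum.inl j))) := by
        simp only [hc2]
        rw [dif_pos j.isLt]
      have kk := k2 (j : ℕ)
      have hcast : (((2 : ℕ) - (j : ℕ) : ℕ) : ℝ) = 2 - ((j : ℕ) : ℝ) := by
        rw [Nat.cast_sub (by omega)]
        norm_num
      rw [hcast, ey] at kk
      simp only [c333]
      push_cast
      linear_combination -kk / 3
    · have hj := j.isLt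
      have ey : c3 (j : ℕ) = y (Sum.inr (Sum.inr (Sum.inr j))) := by
        simp only [hc3]
        rw [dif_pos j.isLt]
      have kk := k3 (j : ℕ)
      have hcast : (((2 : ℕ) - (j : ℕ) : ℕ) : ℝ) = 2 - ((j : ℕ) : ℝ) := by
        rw [Nat.cast_sub (by omega)]
        norm_num
      rw [hcast, ey] at kk
      simp only [c333]
      push_cast
      linear_combination -kk / 3
  · rw [Submodule.span_singleton_le_iff_mem, LinearMap.mem_ker, Matrix.toLin'_apply]
    exact mv333

lemma rank333 : Module.finrank ℝ
    (LinearMap.ker (Matrix.toLin' ((gramT 3 3 3).map (Int.cast : ℤ → ℝ)))) = 1 := by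
  rw [ker333]
  exact finrank_span_singleton ne333

lemma psd244 : ((gramT 2 4 4).map (Int.cast : ℤ → ℝ)).PosSemidef :=
  psd_of_four _ N244 (by decide) (by decide)

lemma mv244 : ((gramT 2 4 4).map (Int.cast : ℤ → ℝ)) *ᵥ (fun v => ((c244 v : ℤ) : ℝ)) = 0 :=
  mulVec_map_cast _ _ (by decide)

lemma ne244 : (fun v : TVertex 2 4 4 => ((c244 v : ℤ) : ℝ)) ≠ 0 := by
  intro h
  have := congrFun h (Sum.inl ())
  norm_num [c244] at this

lemma det244 : ((gramT 2 4 4).map (Int.cast : ℤ → ℝ)).det = 0 :=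
  Matrix.exists_mulVec_eq_zero_iff.mp ⟨_, ne244, mv244⟩

lemma ker244 : LinearMap.ker (Matrix.toLin' ((gramT 2 4 4).map (Int.cast : ℤ → ℝ)))
    = Submodule.span ℝ {(fun v => ((c244 v : ℤ) : ℝ))} := by
  apply le_antisymm
  · intro y hy
    rw [LinearMap.mem_ker, Matrix.toLin'_apply] at hy
    set s := y (Sum.inl ()) with hs_def
    set c1 : ℕ → ℝ := fun n => if h : n < 2 - 1 then y (Sum.inr (Sum.inl ⟨n, h⟩)) else 0 with hc1
    set c2 : ℕ → ℝ := fun n =>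
      if h : n < 4 - 1 then y (Sum.inr (Sum.inr (Sum.inl ⟨n, h⟩))) else 0 with hc2
    set c3 : ℕ → ℝ := fun n =>
      if h : n < 4 - 1 then y (Sum.inr (Sum.inr (Sum.inr ⟨n, h⟩))) else 0 with hc3
    obtain ⟨e0, e1, e2, e3⟩ := gram_eqs 2 4 4 y hy c1 c2 c3 (fun n => rfl) (fun n => rfl)
      (fun n => rfl)
    have k1 := chain_solve 1 c1 s (fun n hn => by rw [hc1]; exact dif_neg (by omega)) e1
    have k2 := chain_solve 3 c2 s (fun n hn => by rw [hc2]; exact dif_neg (by omega)) e2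
    have k3 := chain_solve 3 c3 s (fun n hn => by rw [hc3]; exact dif_neg (by omega)) e3
    rw [Submodule.mem_span_singleton]
    refine ⟨s / 4, ?_⟩
    funext v
    simp only [Pi.smul_apply, smul_eq_mul]
    rcases v with ⟨⟩ | (j | (j | j))
    · simp only [c244]
      rw [← hs_def]
      norm_num
    · have hj := j.isLt
      have ey : c1 (j : ℕ) = y (Sum.inr (Sum.inl j)) := by
        simp only [hc1]
        rw [dif_pos j.isLt]
      have kk := k1 (j : ℕ)
      have hcast : (((1 : ℕ) - (j : ℕ) : ℕ) : ℝ) = 1 - ((j : ℕ) : ℝ) := by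
        rw [Nat.cast_sub (by omega)]
        norm_num
      rw [hcast, ey] at kk
      have hj0 : (((j : ℕ) : ℕ) : ℝ) = 0 := by
        have : (j : ℕ) = 0 := by omega
        rw [this]
        norm_num
      rw [hj0] at kk
      simp only [c244]
      push_cast
      linear_combination -kk / 2
    · have hj := j.isLt
      have ey : c2 (j : ℕ) = y (Sum.inr (Sum.inr (Sum.inl j))) := by
        simp only [hc2]
        rw [dif_pos j.isLt]
      have kk := k2 (j : ℕ)
      have hcast : (((3 : ℕ) - (j : ℕ) : ℕ) : ℝ) = 3 - ((j : ℕ) : ℝ) := by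
        rw [Nat.cast_sub (by omega)]
        norm_num
      rw [hcast, ey] at kk
      simp only [c244]
      push_cast
      linear_combination -kk / 4
    · have hj := j.isLt
      have ey : c3 (j : ℕ) = y (Sum.inr (Sum.inr (Sum.inr j))) := by
        simp only [hc3]
        rw [dif_pos j.isLt]
      have kk := k3 (j : ℕ)
      have hcast : (((3 : ℕ) - (j : ℕ) : ℕ) : ℝ) = 3 - ((j : ℕ) : ℝ) := by
        rw [Nat.cast_sub (by omega)]
        norm_num
      rw [hcast, ey] at kk
      simp only [c244]
      push_cast
      linear_combination -kk / 4
  · rw [Submodule.span_singleton_le_iff_mem, LinearMap.mem_ker, Matrix.toLin'_apply]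
    exact mv244

lemma rank244 : Module.finrank ℝ
    (LinearMap.ker (Matrix.toLin' ((gramT 2 4 4).map (Int.cast : ℤ → ℝ)))) = 1 := by
  rw [ker244]
  exact finrank_span_singleton ne244


/-- for `1 ≤ p ≤ q ≤ r`, the real symmetric matrix `G(p,q,r)` is positive
semidefinite and singular if and only if `(p,q,r)` is one of `(3,3,3)`, `(2,4,4)`,
`(2,3,6)`; moreover in each of these cases the kernel of `G(p,q,r)` is one-dimensional. -/
theorem stmt11 (p q r : ℕ) (hp : 1 ≤ p) (hpq : p ≤ q) (hqr : q ≤ r) :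
    ((((gramT p q r).map (Int.cast : ℤ → ℝ)).PosSemidef ∧
        ((gramT p q r).map (Int.cast : ℤ → ℝ)).det = 0) ↔
      ((p, q, r) = (3, 3, 3) ∨ (p, q, r) = (2, 4, 4) ∨ (p, q, r) = (2, 3, 6))) ∧
    (((p, q, r) = (3, 3, 3) ∨ (p, q, r) = (2, 4, 4) ∨ (p, q, r) = (2, 3, 6)) →
      Module.finrank ℝ
        (LinearMap.ker (Matrix.toLin' ((gramT p q r).map (Int.cast : ℤ → ℝ)))) = 1) := by
  constructor
  · constructor
    · rintro ⟨-, hdet⟩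
      exact forward p q r hp hpq hqr hdet
    · rintro (h | h | h) <;>
        (obtain ⟨h1, h2, h3⟩ : _ ∧ _ ∧ _ := by
          rwa [Prod.mk.injEq, Prod.mk.injEq, ← and_assoc, and_assoc] at h) <;>
        subst h1 <;> subst h2 <;> subst h3
      · exact ⟨psd333, det333⟩
      · exact ⟨psd244, det244⟩
      · exact ⟨psd236, det236⟩
  · rintro (h | h | h) <;>
      (obtain ⟨h1, h2, h3⟩ : _ ∧ _ ∧ _ := by
        rwa [Prod.mk.injEq, Prod.mk.injEq, ← and_assoc, and_assoc] at h) <;>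
      subst h1 <;> subst h2 <;> subst h3
    · exact rank333
    · exact rank244
    · exact rank236
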